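/- Let k be a field and let f(t) ∈ ℤ[t] be a monic polynomial all of whose complex roots lie on the unit circle, with f(1) = 6 and deg(f(t)) ≤ f(1) − 1 = 5. If f(t) = h_R(t) for some standard graded k-algebra R, then f(t) is of type CI. -/

import Mathlib

open Multiset in
lemma my_esymm_cons {R : Type*} [CommRing R] (s : Multiset R) (a : R) (k : ℕ) :
    (a ::ₘ s).esymm (k+1) = s.esymm (k+1) + a * s.esymm k := by
  simp only [Multiset.esymm, Multiset.powersetCard_cons, Multiset.map_add, Multiset.sum_add,
    Multiset.map_map, Function.comp_def, Multiset.prod_cons]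
  rw [← Multiset.sum_map_mul_left]

open Multiset in
lemma my_esymm_zero' {R : Type*} [CommRing R] (s : Multiset R) : s.esymm 0 = 1 := by
  simp [Multiset.esymm]

open Multiset in
lemma my_esymm_of_lt {R : Type*} [CommRing R] (s : Multiset R) {k : ℕ} (h : Multiset.card s < k) :
    s.esymm k = 0 := by
  simp [Multiset.esymm, Multiset.powersetCard_eq_empty _ h]

open Multiset in
lemma my_psum2 {R : Type*} [CommRing R] (s : Multiset R) :
    (s.map (fun z => z^2)).sum = (s.esymm 1)^2 - 2 * s.esymm 2 := by
  induction s using Multiset.induction with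
  | empty =>
      have e1 : (0 : Multiset R).esymm 1 = 0 := my_esymm_of_lt _ (by simp)
      have e2 : (0 : Multiset R).esymm 2 = 0 := my_esymm_of_lt _ (by simp)
      simp [e1, e2]
  | cons a s ih =>
      rw [Multiset.map_cons, Multiset.sum_cons, ih]
      have h1 := my_esymm_cons s a 0
      have h2 := my_esymm_cons s a 1
      rw [h1, h2, my_esymm_zero']
      ring

open Multiset in
lemma my_psum3 {R : Type*} [CommRing R] (s : Multiset R) :
    (s.map (fun z => z^3)).sum =
      (s.esymm 1)^3 - 3 * s.esymm 1 * s.esymm 2 + 3 * s.esymm 3 := by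
  induction s using Multiset.induction with
  | empty =>
      have e1 : (0 : Multiset R).esymm 1 = 0 := my_esymm_of_lt _ (by simp)
      have e2 : (0 : Multiset R).esymm 2 = 0 := my_esymm_of_lt _ (by simp)
      have e3 : (0 : Multiset R).esymm 3 = 0 := my_esymm_of_lt _ (by simp)
      simp [e1, e2, e3]
  | cons a s ih =>
      rw [Multiset.map_cons, Multiset.sum_cons, ih]
      have h1 := my_esymm_cons s a 0
      have h2 := my_esymm_cons s a 1
      have h3 := my_esymm_cons s a 2
      rw [h1, h2, h3, my_esymm_zero']
      ring

open Multiset in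
lemma my_esymm_card {R : Type*} [CommRing R] (s : Multiset R) :
    s.esymm (Multiset.card s) = s.prod := by
  induction s using Multiset.induction with
  | empty => simp [my_esymm_zero']
  | cons a s ih =>
      rw [Multiset.card_cons, my_esymm_cons, ih, my_esymm_of_lt s (Nat.lt_succ_self _),
        Multiset.prod_cons, zero_add]

open Multiset in
lemma my_esymm_inv {F : Type*} [Field F] (s : Multiset F) (hz : ∀ z ∈ s, z ≠ 0) :
    ∀ k, k ≤ Multiset.card s →
      (s.map (fun z => z⁻¹)).esymm k * s.prod = s.esymm (Multiset.card s - k) := by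
  induction s using Multiset.induction with
  | empty =>
      intro k hk
      have : k = 0 := Nat.le_zero.mp (by simpa using hk)
      subst this; simp [my_esymm_zero']
  | cons a s ih =>
      intro k hk
      have ha : a ≠ 0 := hz a (Multiset.mem_cons_self a s)
      have hai : a⁻¹ * a = 1 := inv_mul_cancel₀ ha
      have hz' : ∀ z ∈ s, z ≠ 0 := fun z hzz => hz z (Multiset.mem_cons_of_mem hzz)
      rw [Multiset.map_cons, Multiset.prod_cons]
      match k with
      | 0 =>
          rw [my_esymm_zero', one_mul, Nat.sub_zero, Multiset.card_cons,
            ← Multiset.prod_cons (a := a), ← Multiset.card_cons a s, my_esymm_card]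
      | (k'+1) =>
          rw [my_esymm_cons]
          rw [Multiset.card_cons] at hk ⊢
          rcases Nat.lt_or_ge k' (Multiset.card s) with hlt | hge
          · have h1 : k' + 1 ≤ Multiset.card s := hlt
            have e1 := ih hz' (k'+1) h1
            have e2 := ih hz' k' (Nat.le_of_lt hlt)
            have hsub : Multiset.card s + 1 - (k' + 1) = (Multiset.card s - (k'+1)) + 1 := by
              omega
            rw [hsub, my_esymm_cons]
            have hsub2 : Multiset.card s - (k' + 1) + 1 = Multiset.card s - k' := by omega
            rw [hsub2]
            linear_combination a * e1 + e2 +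
              ((s.map (fun z => z⁻¹)).esymm k' * s.prod) * hai
          · have hk' : k' = Multiset.card s := by omega
            subst hk'
            have hz0 : (Multiset.map (fun z => z⁻¹) s).esymm (Multiset.card s + 1) = 0 :=
              my_esymm_of_lt _ (by simp)
            have e2 := ih hz' (Multiset.card s) le_rfl
            rw [Nat.sub_self] at e2
            rw [my_esymm_zero'] at e2
            rw [hz0, Nat.sub_self, my_esymm_zero']
            linear_combination e2 + ((Multiset.map (fun z => z⁻¹) s).esymm (Multiset.card s) * s.prod) * hai


lemma coeff_osX_pow (d : ℕ) :
    (PowerSeries.coeff (R := ℤ) 0) ((1 - PowerSeries.X)^d) = 1 ∧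
    (PowerSeries.coeff (R := ℤ) 1) ((1 - PowerSeries.X)^d) = -(d:ℤ) ∧
    (PowerSeries.coeff (R := ℤ) 2) ((1 - PowerSeries.X)^d) = (d.choose 2 : ℤ) := by
  induction d with
  | zero => simp
  | succ d ih =>
      obtain ⟨i0, i1, i2⟩ := ih
      have hstep : (1 - PowerSeries.X : PowerSeries ℤ)^(d+1)
          = (1 - PowerSeries.X)^d - (1 - PowerSeries.X)^d * PowerSeries.X := by ring
      rw [hstep]
      simp only [map_sub, i0, i1, i2, PowerSeries.coeff_zero_mul_X,
        PowerSeries.coeff_succ_mul_X]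
      refine ⟨by ring, by push_cast; ring, ?_⟩
      rw [Nat.choose_succ_succ, Nat.choose_one_right]
      push_cast
      ring

section Graded
variable {k R : Type*} [Field k] [CommRing R] [Algebra k R]
  (G : ℕ → Submodule k R) [GradedAlgebra G]

lemma grading_two_le (hgen : Algebra.adjoin k (G 1 : Set R) = ⊤)
    (hG0 : G 0 = (1 : Submodule k R)) :
    (G 2 : Submodule k R) ≤ G 1 * G 1 := by
  classical
  intro x hx
  have hxtop : x ∈ Submodule.span k ((Submonoid.closure (G 1 : Set R) : Submonoid R) : Set R) := by
    have : x ∈ Subalgebra.toSubmodule (Algebra.adjoin k ((G 1 : Submodule k R) : Set R)) := by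
      rw [hgen]; trivial
    rwa [Algebra.adjoin_eq_span] at this
  have key : ∀ y ∈ (Submonoid.closure (G 1 : Set R) : Submonoid R),
      ∃ m : ℕ, y ∈ G m ∧ ((DirectSum.decompose G y 2 : G 2) : R) ∈ G 1 * G 1 := by
    intro y hy
    induction hy using Submonoid.closure_induction with
    | mem z hz =>
        exact ⟨1, hz, by
          rw [DirectSum.decompose_of_mem_ne G hz (by norm_num)]
          exact Submodule.zero_mem _⟩
    | one =>
        refine ⟨0, SetLike.one_mem_graded G, ?_⟩
        rw [DirectSum.decompose_of_mem_ne G (SetLike.one_mem_graded G) (by norm_num)]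
        exact Submodule.zero_mem _
    | mul y z hy hz ihy ihz =>
        obtain ⟨m, hym, hyp⟩ := ihy
        obtain ⟨l, hzl, hzp⟩ := ihz
        refine ⟨m + l, SetLike.mul_mem_graded hym hzl, ?_⟩
        by_cases h2 : m + l = 2
        · rw [DirectSum.decompose_of_mem_same G (h2 ▸ SetLike.mul_mem_graded hym hzl)]
          have hm2 : m ≤ 2 := by omega
          interval_cases m
          · -- m = 0, l = 2
            have hl : l = 2 := by omega
            subst hl
            rw [hG0] at hym
            obtain ⟨c, rfl⟩ := Submodule.mem_one.mp hym
            rw [← Algebra.smul_def]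
            apply Submodule.smul_mem
            rwa [DirectSum.decompose_of_mem_same G hzl] at hzp
          · -- m = 1, l = 1
            have hl : l = 1 := by omega
            subst hl
            exact Submodule.mul_mem_mul hym hzl
          · -- m = 2, l = 0
            have hl : l = 0 := by omega
            subst hl
            rw [hG0] at hzl
            obtain ⟨c, rfl⟩ := Submodule.mem_one.mp hzl
            rw [mul_comm y ((algebraMap k R) c), ← Algebra.smul_def]
            apply Submodule.smul_mem
            rwa [DirectSum.decompose_of_mem_same G hym] at hyp
        · rw [DirectSum.decompose_of_mem_ne G (SetLike.mul_mem_graded hym hzl) h2]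
          exact Submodule.zero_mem _
  have main : ∀ y ∈ Submodule.span k ((Submonoid.closure (G 1 : Set R) : Submonoid R) : Set R),
      ((DirectSum.decompose G y 2 : G 2) : R) ∈ G 1 * G 1 := by
    intro y hy
    induction hy using Submodule.span_induction with
    | mem z hz => exact (key z hz).choose_spec.2
    | zero => rw [DirectSum.decompose_zero]; simp
    | add a b _ _ iha ihb =>
        rw [DirectSum.decompose_add]
        push_cast [DirectSum.add_apply]
        exact Submodule.add_mem _ iha ihb
    | smul c a _ iha =>
        rw [DirectSum.decompose_smul]
        push_cast [DirectSum.smul_apply]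
        exact Submodule.smul_mem _ c iha
  have hx2 := main x hxtop
  rwa [DirectSum.decompose_of_mem_same G hx] at hx2

lemma finrank_grading_two_le (hgen : Algebra.adjoin k (G 1 : Set R) = ⊤)
    (hG0 : G 0 = (1 : Submodule k R))
    [Module.Finite k (G 1)] [Module.Finite k (G 2)] :
    Module.finrank k (G 2) ≤ (Module.finrank k (G 1) + 1).choose 2 := by
  classical
  set n := Module.finrank k (G 1) with hn
  let b : Module.Basis (Fin n) k (G 1) := Module.finBasis k (G 1)
  set v : Fin n → R := fun i => (b i : R) with hv
  have hspan : (G 1 : Submodule k R) = Submodule.span k (Set.range v) := by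
    conv_lhs => rw [← Submodule.map_subtype_top (G 1)]
    rw [← b.span_eq, Submodule.map_span, ← Set.range_comp]
    rfl
  let g : Sym2 (Fin n) → R := Sym2.lift ⟨fun i j => v i * v j, fun i j => mul_comm _ _⟩
  have hmul : (G 1 * G 1 : Submodule k R) ≤ Submodule.span k (Set.range g) := by
    rw [Submodule.mul_le]
    intro a ha c hc
    rw [hspan] at ha hc
    induction ha using Submodule.span_induction with
    | mem x hx =>
        induction hc using Submodule.span_induction with
        | mem y hy =>
            obtain ⟨i, rfl⟩ := hx
            obtain ⟨j, rfl⟩ := hy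
            exact Submodule.subset_span ⟨s(i, j), rfl⟩
        | zero => rw [mul_zero]; exact Submodule.zero_mem _
        | add y z _ _ ihy ihz => rw [mul_add]; exact Submodule.add_mem _ ihy ihz
        | smul c y _ ihy => rw [mul_smul_comm]; exact Submodule.smul_mem _ _ ihy
    | zero => rw [zero_mul]; exact Submodule.zero_mem _
    | add x y _ _ ihx ihy => rw [add_mul]; exact Submodule.add_mem _ ihx ihy
    | smul c x _ ihx => rw [smul_mul_assoc]; exact Submodule.smul_mem _ _ ihx
  have hle : (G 2 : Submodule k R) ≤ Submodule.span k (Set.range g) :=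
    le_trans (grading_two_le G hgen hG0) hmul
  have hfin : Module.Finite k (Submodule.span k (Set.range g)) :=
    FiniteDimensional.span_of_finite k (Set.finite_range g)
  calc Module.finrank k (G 2)
      ≤ Module.finrank k (Submodule.span k (Set.range g)) := Submodule.finrank_mono hle
    _ ≤ Fintype.card (Sym2 (Fin n)) := finrank_range_le_card g
    _ = (n + 1).choose 2 := by rw [Sym2.card, Fintype.card_fin]

end Graded


lemma two_mul_choose_two (m : ℕ) : (2:ℤ) * (m.choose 2 : ℤ) = m * (m - 1) := by
  induction m with
  | zero => norm_num
  | succ m ih =>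
      rw [Nat.choose_succ_succ, Nat.choose_one_right]
      push_cast
      push_cast at ih
      linarith



open Polynomial

/-- `Ψ_m(t) = 1 + t + ⋯ + t^{m-1} ∈ ℤ[t]`. -/
noncomputable def Psi (m : ℕ) : Polynomial ℤ :=
  ∑ i ∈ Finset.range m, Polynomial.X ^ i

/-- A polynomial is of type CI if it is a (possibly empty) product `Ψ_{m_1} ⋯ Ψ_{m_r}`
with all `m_i` positive. -/
def IsTypeCI (f : Polynomial ℤ) : Prop :=
  ∃ l : List ℕ, (∀ m ∈ l, 0 < m) ∧ f = (l.map Psi).prod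

/-- All complex roots of the integer polynomial `h` lie on the unit circle. -/
def RootsOnUnitCircle (h : Polynomial ℤ) : Prop :=
  ∀ z : ℂ, Polynomial.aeval z h = 0 → ‖z‖ = 1

/-- A standard graded `k`-algebra: a commutative ℕ-graded `k`-algebra with
finite-dimensional homogeneous components, degree-zero part equal to `k`,
and generated as a `k`-algebra in degree one. -/
structure StdGradedAlgebra (k : Type*) [Field k] where
  carrier : Type*
  [commRing : CommRing carrier]
  [algebra : Algebra k carrier]
  [nontriv : Nontrivial carrier]
  grading : ℕ → Submodule k carrier
  [gradedAlgebra : GradedAlgebra grading]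
  finiteDim : ∀ n, Module.Finite k (grading n)
  degZero : grading 0 = (1 : Submodule k carrier)
  genOne : Algebra.adjoin k (grading 1 : Set carrier) = ⊤

attribute [instance] StdGradedAlgebra.commRing StdGradedAlgebra.algebra
  StdGradedAlgebra.nontriv StdGradedAlgebra.gradedAlgebra

/-- `h` is the `h`-polynomial of `A`: as formal power series,
`Hilb(A,t) = h(t)/(1-t)^d` for some `d : ℕ`, i.e. `h = Hilb(A,t)·(1-t)^d`,
and `h(1) > 0`. -/
def IsHPoly {k : Type*} [Field k] (A : StdGradedAlgebra k) (h : Polynomial ℤ) : Prop :=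
  0 < h.eval 1 ∧
    ∃ d : ℕ, (h : PowerSeries ℤ) =
      PowerSeries.mk (fun n => (Module.finrank k (A.grading n) : ℤ)) *
        (1 - PowerSeries.X) ^ d

lemma classify (f : Polynomial ℤ) (hmon : f.Monic) (hroots : RootsOnUnitCircle f)
    (h0 : f.coeff 0 = 1) (h1 : f.eval 1 = 6) (hdeg : f.natDegree ≤ 5) :
    f = X^3 + 2*X^2 + 2*X + 1 ∨ f = X^5 + X^4 + X^3 + X^2 + X + 1 ∨
      f = X^4 + X^3 + 2*X^2 + X + 1 := by
  classical
  set F : Polynomial ℂ := f.map (algebraMap ℤ ℂ) with hF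
  have hFm : F.Monic := hmon.map _
  have hFdeg : F.natDegree = f.natDegree := hmon.natDegree_map _
  have hsplits : F.Splits := IsAlgClosed.splits F
  set M : Multiset ℂ := F.roots with hM
  have hF0 : F ≠ 0 := hFm.ne_zero
  have hcard : Multiset.card M = f.natDegree := by
    rw [← hFdeg]; exact (Polynomial.splits_iff_card_roots.mp hsplits)
  have habs : ∀ z ∈ M, ‖z‖ = 1 := by
    intro z hz
    apply hroots
    have h2 : F.eval z = 0 := Polynomial.isRoot_of_mem_roots hz
    rwa [Polynomial.aeval_def, ← Polynomial.eval_map]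
  have hne : ∀ z ∈ M, z ≠ 0 := by
    intro z hz h
    have := habs z hz
    rw [h] at this; simp at this
  -- conjugation invariance of the root multiset
  have hconj : M.map (starRingEnd ℂ) = M := by
    have h2 : F.map (starRingEnd ℂ) = F := by
      rw [hF, Polynomial.map_map]
      congr 1
      exact Subsingleton.elim _ _
    conv_rhs => rw [hM, ← h2]
    rw [hsplits.roots_map]
  have hinv : M.map (fun z => z⁻¹) = M := by
    have heq : M.map (fun z => z⁻¹) = M.map (starRingEnd ℂ) := by
      apply Multiset.map_congr rfl
      intro z hz
      have h1 : z * (starRingEnd ℂ) z = 1 := by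
        rw [Complex.mul_conj]
        norm_cast
        rw [Complex.normSq_eq_norm_sq, habs z hz]; norm_num
      exact inv_eq_of_mul_eq_one_right h1
    rw [heq, hconj]
  -- coefficients via elementary symmetric functions
  have hco : ∀ k, k ≤ f.natDegree →
      (f.coeff k : ℂ) = (-1)^(f.natDegree - k) * M.esymm (f.natDegree - k) := by
    intro k hk
    have h2 := Polynomial.coeff_eq_esymm_roots_of_splits hsplits (k := k) (by rw [hFdeg]; exact hk)
    rw [hFm.leadingCoeff, one_mul, hFdeg] at h2
    rw [← h2, hF, Polynomial.coeff_map]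
    simp
  have hprodM : M.prod = (-1)^f.natDegree := by
    have h2 := hco 0 (Nat.zero_le _)
    rw [h0, Nat.sub_zero, ← hcard, my_esymm_card] at h2
    have key : ((-1:ℂ))^(Multiset.card M) * (-1)^(Multiset.card M) = 1 := by
      rw [← mul_pow]; norm_num
    rw [← hcard]
    linear_combination (-((-1:ℂ))^(Multiset.card M)) * h2 - M.prod * key
  have hsym : ∀ k, k ≤ f.natDegree → M.esymm k * (-1)^f.natDegree
      = M.esymm (f.natDegree - k) := by
    intro k hk
    have h2 := my_esymm_inv M hne k (by rw [hcard]; exact hk)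
    rw [hinv, hprodM, hcard] at h2
    exact h2
  -- palindromicity
  have hpal : ∀ k, k ≤ f.natDegree → f.coeff k = f.coeff (f.natDegree - k) := by
    intro k hk
    have hc1 := hco k hk
    have hc2 := hco (f.natDegree - k) (Nat.sub_le _ _)
    rw [Nat.sub_sub_self hk] at hc2
    have hs := hsym k hk
    have h4 : ((-1:ℂ))^(f.natDegree - k) * (-1)^(f.natDegree) = (-1)^k := by
      rcases Nat.even_or_odd f.natDegree with hn | hn <;>
        rcases Nat.even_or_odd k with hkp | hkp
      · have he : Even (f.natDegree - k) :=
          (Nat.even_sub hk).mpr (iff_of_true hn hkp)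
        rw [he.neg_one_pow, hn.neg_one_pow, hkp.neg_one_pow]; ring
      · have he : Odd (f.natDegree - k) := by
          rw [← Nat.not_even_iff_odd]
          intro h
          exact (Nat.not_even_iff_odd.mpr hkp) (((Nat.even_sub hk).mp h).mp hn)
        rw [he.neg_one_pow, hn.neg_one_pow, hkp.neg_one_pow]; ring
      · have he : Odd (f.natDegree - k) := by
          rw [← Nat.not_even_iff_odd]
          intro h
          exact (Nat.not_even_iff_odd.mpr hn) (((Nat.even_sub hk).mp h).mpr hkp)
        rw [he.neg_one_pow, hn.neg_one_pow, hkp.neg_one_pow]; ring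
      · have he : Even (f.natDegree - k) :=
          (Nat.even_sub hk).mpr (iff_of_false (Nat.not_even_iff_odd.mpr hn)
            (Nat.not_even_iff_odd.mpr hkp))
        rw [he.neg_one_pow, hn.neg_one_pow, hkp.neg_one_pow]; ring
    apply Int.cast_injective (α := ℂ)
    rw [hc1, hc2, ← hs]
    linear_combination (M.esymm k) * h4
  -- power-sum bounds
  have hbound : ∀ (j : ℕ) (p : ℤ), ((p:ℂ) = (M.map (fun z => z^j)).sum) →
      |p| ≤ (f.natDegree : ℤ) := by
    intro j p hp
    have hnorm : ‖(p:ℂ)‖ ≤ (Multiset.card M : ℝ) := by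
      rw [hp]
      refine le_trans (norm_multiset_sum_le _) ?_
      rw [Multiset.map_map]
      calc (M.map (fun z => ‖z^j‖)).sum
          ≤ (Multiset.card (M.map (fun z => ‖z^j‖))) • (1:ℝ) := by
            apply Multiset.sum_le_card_nsmul
            intro x hx
            obtain ⟨z, hz, rfl⟩ := Multiset.mem_map.mp hx
            rw [norm_pow, habs z hz, one_pow]
        _ = (Multiset.card M : ℝ) := by simp
    rw [Complex.norm_intCast] at hnorm
    have : |(p:ℝ)| ≤ ((f.natDegree:ℤ) : ℝ) := by rw [← hcard]; exact_mod_cast hnorm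
    rw [← Int.cast_abs] at this
    exact_mod_cast this
  have hE : ∀ j, 1 ≤ j → j ≤ f.natDegree →
      (f.coeff (f.natDegree - j) : ℂ) = (-1)^j * M.esymm j := by
    intro j hj1 hj
    have h2 := hco (f.natDegree - j) (Nat.sub_le _ _)
    rwa [Nat.sub_sub_self hj] at h2
  have hp1 : 1 ≤ f.natDegree → |f.coeff (f.natDegree - 1)| ≤ (f.natDegree:ℤ) := by
    intro hn
    have h2 : |(-(f.coeff (f.natDegree - 1)))| ≤ (f.natDegree:ℤ) := by
      apply hbound 1
      have hE1 := hE 1 le_rfl hn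
      rw [show (M.map (fun z => z^1)) = M from by simp]
      have hsum : M.sum = M.esymm 1 := by
        rw [Multiset.esymm, Multiset.powersetCard_one, Multiset.map_map]
        simp
      rw [hsum]
      push_cast
      push_cast at hE1
      linear_combination -hE1
    rwa [abs_neg] at h2
  have hp2 : 2 ≤ f.natDegree →
      |(f.coeff (f.natDegree - 1)) * (f.coeff (f.natDegree - 1)) - 2 * f.coeff (f.natDegree - 2)| ≤ (f.natDegree:ℤ) := by
    intro hn
    apply hbound 2
    rw [my_psum2]
    have hE1 := hE 1 le_rfl (by omega)
    have hE2 := hE 2 (by omega) hn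
    push_cast
    push_cast at hE1 hE2
    linear_combination ((f.coeff (f.natDegree - 1) : ℂ) - M.esymm 1) * hE1 - 2 * hE2
  have hp3 : 3 ≤ f.natDegree →
      |(-(f.coeff (f.natDegree - 1) * f.coeff (f.natDegree - 1) * f.coeff (f.natDegree - 1))
        + 3 * f.coeff (f.natDegree - 1) * f.coeff (f.natDegree - 2)
        - 3 * f.coeff (f.natDegree - 3))| ≤ (f.natDegree:ℤ) := by
    intro hn
    apply hbound 3
    rw [my_psum3]
    have hE1 := hE 1 le_rfl (by omega)
    have hE2 := hE 2 (by omega) (by omega)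
    have hE3 := hE 3 (by omega) hn
    push_cast
    push_cast at hE1 hE2 hE3
    linear_combination (-((f.coeff (f.natDegree - 1):ℂ))^2
        + (f.coeff (f.natDegree - 1):ℂ) * M.esymm 1
        - (M.esymm 1)^2 + 3 * M.esymm 2) * hE1
      + (3 * (f.coeff (f.natDegree - 1):ℂ)) * hE2 - 3 * hE3
  have hlead : f.coeff f.natDegree = 1 := hmon.coeff_natDegree
  have heval : (∑ i ∈ Finset.range (f.natDegree + 1), f.coeff i) = 6 := by
    have h2 := Polynomial.eval_eq_sum_range (p := f) (1:ℤ)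
    rw [h1] at h2
    simpa using h2.symm
  clear hco hprodM hsym hE hbound hconj hinv habs hne hcard hsplits hFdeg hFm hF0 hroots
  obtain ⟨n, hn⟩ : ∃ n, f.natDegree = n := ⟨_, rfl⟩
  rw [hn] at hdeg heval hlead hpal hp1 hp2 hp3
  interval_cases n
  · -- degree 0
    simp [Finset.sum_range_succ, h0] at heval
  · -- degree 1
    simp [Finset.sum_range_succ, h0, hlead] at heval
  · -- degree 2
    have hb1 := hp1 (by norm_num)
    norm_num at hb1
    obtain ⟨l1, r1⟩ := abs_le.mp hb1
    simp [Finset.sum_range_succ, h0, hlead] at heval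
    omega
  · -- degree 3
    have e1 := hpal 1 (by norm_num)
    norm_num at e1
    simp [Finset.sum_range_succ, h0, hlead] at heval
    have hv1 : f.coeff 1 = 2 := by omega
    have hv2 : f.coeff 2 = 2 := by omega
    left
    have hf := f.as_sum_range_C_mul_X_pow
    rw [hn] at hf
    rw [Finset.sum_range_succ, Finset.sum_range_succ, Finset.sum_range_succ,
      Finset.sum_range_succ, Finset.sum_range_zero, h0, hlead, hv1, hv2] at hf
    rw [hf]
    simp only [map_one, map_ofNat]
    ring
  · -- degree 4
    have e1 := hpal 1 (by norm_num)
    norm_num at e1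
    have hb1 := hp1 (by norm_num)
    have hb2 := hp2 (by norm_num)
    have hb3 := hp3 (by norm_num)
    norm_num at hb1 hb2 hb3
    obtain ⟨l1, r1⟩ := abs_le.mp hb1
    obtain ⟨l2, r2⟩ := abs_le.mp hb2
    obtain ⟨l3, r3⟩ := abs_le.mp hb3
    simp [Finset.sum_range_succ, h0, hlead] at heval
    set b := f.coeff 3 with hbdef
    have hv : f.coeff 3 = 1 ∧ f.coeff 2 = 2 ∧ f.coeff 1 = 1 := by
      rw [← hbdef]
      interval_cases b <;> omega
    obtain ⟨hv3, hv2, hv1⟩ := hv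
    right; right
    have hf := f.as_sum_range_C_mul_X_pow
    rw [hn] at hf
    rw [Finset.sum_range_succ, Finset.sum_range_succ, Finset.sum_range_succ,
      Finset.sum_range_succ, Finset.sum_range_succ, Finset.sum_range_zero,
      h0, hlead, hv1, hv2, hv3] at hf
    rw [hf]
    simp only [map_one, map_ofNat]
    ring
  · -- degree 5
    have e1 := hpal 1 (by norm_num)
    have e2 := hpal 2 (by norm_num)
    norm_num at e1 e2
    have hb1 := hp1 (by norm_num)
    have hb2 := hp2 (by norm_num)
    have hb3 := hp3 (by norm_num)
    norm_num at hb1 hb2 hb3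
    obtain ⟨l1, r1⟩ := abs_le.mp hb1
    obtain ⟨l2, r2⟩ := abs_le.mp hb2
    obtain ⟨l3, r3⟩ := abs_le.mp hb3
    simp [Finset.sum_range_succ, h0, hlead] at heval
    set b := f.coeff 4 with hbdef
    have hv : f.coeff 4 = 1 ∧ f.coeff 3 = 1 ∧ f.coeff 2 = 1 ∧ f.coeff 1 = 1 := by
      rw [← hbdef]
      interval_cases b <;> omega
    obtain ⟨hv4, hv3, hv2, hv1⟩ := hv
    right; left
    have hf := f.as_sum_range_C_mul_X_pow
    rw [hn] at hf
    rw [Finset.sum_range_succ, Finset.sum_range_succ, Finset.sum_range_succ,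
      Finset.sum_range_succ, Finset.sum_range_succ, Finset.sum_range_succ,
      Finset.sum_range_zero, h0, hlead, hv1, hv2, hv3, hv4] at hf
    rw [hf]
    simp only [map_one]
    ring


/-- A monic integer polynomial with all roots on the unit circle, `f(1) = 6` and
`deg f ≤ 5`, which is the `h`-polynomial of some standard graded `k`-algebra, is
of type CI. -/
theorem kronecker_value_six (k : Type*) [Field k] (f : Polynomial ℤ) (hmon : f.Monic)
    (hroots : RootsOnUnitCircle f) (h1 : f.eval 1 = 6) (hdeg : f.natDegree ≤ 5)
    (A : StdGradedAlgebra k) (hh : IsHPoly A f) :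
    IsTypeCI f := by
  classical
  obtain ⟨hpos, d, heq⟩ := hh
  haveI := A.finiteDim 1
  haveI := A.finiteDim 2
  have hH0 : Module.finrank k (A.grading 0) = 1 := by
    rw [A.degZero, Submodule.one_eq_span]
    exact finrank_span_singleton one_ne_zero
  obtain ⟨c0, c1, c2⟩ := coeff_osX_pow d
  have hcoeff : ∀ n : ℕ, f.coeff n = ∑ i ∈ Finset.range (n+1),
      (Module.finrank k (A.grading i) : ℤ) *
        (PowerSeries.coeff (n - i)) ((1-PowerSeries.X)^d) := by
    intro n
    have h2 := congrArg (PowerSeries.coeff n) heq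
    rw [Polynomial.coeff_coe, PowerSeries.coeff_mul,
      Finset.Nat.sum_antidiagonal_eq_sum_range_succ_mk] at h2
    simpa [PowerSeries.coeff_mk] using h2
  have e0 := hcoeff 0
  have e1 := hcoeff 1
  have e2 := hcoeff 2
  rw [Finset.sum_range_succ, Finset.sum_range_zero, zero_add, Nat.sub_self, c0, hH0] at e0
  rw [Finset.sum_range_succ, Finset.sum_range_succ, Finset.sum_range_zero, zero_add,
    Nat.sub_self, c0, hH0] at e1
  norm_num at e1
  rw [c1] at e1
  rw [Finset.sum_range_succ, Finset.sum_range_succ, Finset.sum_range_succ,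
    Finset.sum_range_zero, zero_add, Nat.sub_self, c0, hH0] at e2
  norm_num at e2
  rw [c1, c2] at e2
  norm_num at e0
  rcases classify f hmon hroots e0 h1 hdeg with hf | hf | hf
  · refine ⟨[2, 3], ?_, ?_⟩
    · intro m hm
      simp only [List.mem_cons, List.not_mem_nil, or_false] at hm
      rcases hm with rfl | rfl <;> norm_num
    · rw [hf]
      simp only [List.map_cons, List.map_nil, List.prod_cons, List.prod_nil, Psi,
        Finset.sum_range_succ, Finset.sum_range_zero]
      ring
  · refine ⟨[6], ?_, ?_⟩
    · intro m hm
      simp only [List.mem_cons, List.not_mem_nil, or_false] at hm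
      rcases hm with rfl <;> norm_num
    · rw [hf]
      simp only [List.map_cons, List.map_nil, List.prod_cons, List.prod_nil, Psi,
        Finset.sum_range_succ, Finset.sum_range_zero]
      ring
  · exfalso
    have hf1 : f.coeff 1 = 1 := by
      rw [hf, show (2 : Polynomial ℤ) = Polynomial.C 2 from (map_ofNat _ 2).symm]
      simp [Polynomial.coeff_X_pow, Polynomial.coeff_C_mul, Polynomial.coeff_one,
        Polynomial.coeff_X]
    have hf2 : f.coeff 2 = 2 := by
      rw [hf, show (2 : Polynomial ℤ) = Polynomial.C 2 from (map_ofNat _ 2).symm]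
      simp [Polynomial.coeff_X_pow, Polynomial.coeff_C_mul, Polynomial.coeff_one,
        Polynomial.coeff_X]
    have hb : Module.finrank k (A.grading 2)
        ≤ (Module.finrank k (A.grading 1) + 1).choose 2 :=
      finrank_grading_two_le A.grading A.genOne A.degZero
    set H1 : ℕ := Module.finrank k (A.grading 1) with hH1
    set H2 : ℕ := Module.finrank k (A.grading 2) with hH2
    rw [hf1] at e1
    rw [hf2] at e2
    have hA : (H1 : ℤ) = 1 + d := by linarith
    have hB : (2:ℤ) + d * (H1:ℤ) - (d.choose 2 : ℤ) = (H2 : ℤ) := by linarith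
    have hble : (H2:ℤ) ≤ ((H1+1).choose 2 : ℤ) := by exact_mod_cast hb
    have hchd := two_mul_choose_two d
    have hchH := two_mul_choose_two (H1+1)
    push_cast at hchH
    nlinarith [hA, hB, hble, hchd, hchH]
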